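/- For α ∈ (2,3], the function h_α(z) = (z^α − 1 − α(z−1))/(z−1)² (using the principal branch of z^α, extended continuously at z = 0 by h_α(0) = α and at z = 1 by h_α(1) = α(α−1)/2) has no zeros in the slit plane ℂ ∖ (−∞, 0). -/

import Mathlib

open Classical in
/-- h_α(z) = (z^α − 1 − α(z−1))/(z−1)², extended continuously at z = 1 and z = 0. -/
noncomputable def halpha (α : ℝ) (z : ℂ) : ℂ :=
  if z = 1 then ((α * (α - 1) / 2 : ℝ) : ℂ)
  else if z = 0 then (α : ℂ)
  else (z ^ (α : ℂ) - 1 - (α : ℂ) * (z - 1)) / (z - 1) ^ 2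

open Complex Set intervalIntegral

/-- Comparison of arguments via the cross product, in the closed upper half plane. -/
lemma seg_arg_le {z w : ℂ} (hz : z ≠ 0) (him : 0 ≤ z.im)
    (hw : w ≠ 0) (hwim : 0 ≤ w.im) (hwlt : w.arg < Real.pi)
    (hcross : w.im * z.re - w.re * z.im ≤ 0) : w.arg ≤ z.arg := by
  by_contra h
  push_neg at h
  have hzarg0 : 0 ≤ z.arg := Complex.arg_nonneg_iff.mpr him
  have h1 : 0 < w.arg - z.arg := sub_pos.mpr h
  have h2 : w.arg - z.arg < Real.pi := by linarith
  have hs := Real.sin_pos_of_pos_of_lt_pi h1 h2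
  rw [Real.sin_sub, Complex.sin_arg, Complex.cos_arg hw, Complex.sin_arg,
    Complex.cos_arg hz] at hs
  have hwabs : 0 < ‖w‖ := norm_pos_iff.mpr hw
  have hzabs : 0 < ‖z‖ := norm_pos_iff.mpr hz
  have key : w.im / ‖w‖ * (z.re / ‖z‖)
      - w.re / ‖w‖ * (z.im / ‖z‖)
      = (w.im * z.re - w.re * z.im) / (‖w‖ * ‖z‖) := by
    field_simp
  rw [key] at hs
  have : (w.im * z.re - w.re * z.im) / (‖w‖ * ‖z‖) ≤ 0 :=
    div_nonpos_of_nonpos_of_nonneg hcross (mul_pos hwabs hzabs).le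
  linarith

lemma halpha_ne_zero_of_im_nonneg (α : ℝ) (hα2 : 2 < α) (hα3 : α ≤ 3)
    (z : ℂ) (hzs : z ∈ Complex.slitPlane) (him : 0 ≤ z.im) : halpha α z ≠ 0 := by
  have hz0 : z ≠ 0 := Complex.slitPlane_ne_zero hzs
  by_cases hz1 : z = 1
  · subst hz1
    simp only [halpha, if_pos rfl]
    exact Complex.ofReal_ne_zero.mpr (by nlinarith)
  · rw [halpha, if_neg hz1, if_neg hz0]
    refine div_ne_zero ?_ (pow_ne_zero 2 (sub_ne_zero.mpr hz1))
    -- setup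
    set s : ℝ := α - 2 with hs_def
    have hs0 : 0 < s := by simp [hs_def]; linarith
    have hs1 : s ≤ 1 := by simp [hs_def]; linarith
    set w : ℝ → ℂ := fun t => 1 + (t : ℂ) * (z - 1) with hw_def
    have hwre : ∀ t : ℝ, (w t).re = 1 + t * (z.re - 1) := by
      intro t; simp [hw_def]
    have hwim : ∀ t : ℝ, (w t).im = t * z.im := by
      intro t; simp [hw_def]
    have hzargpi : z.arg < Real.pi := by
      rw [Complex.arg_lt_pi_iff]
      rcases Complex.mem_slitPlane_iff.mp hzs with h | h
      · exact Or.inl h.le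
      · exact Or.inr h
    have hzarg0 : 0 ≤ z.arg := Complex.arg_nonneg_iff.mpr him
    -- membership of the segment in the slit plane
    have hwmem : ∀ t ∈ Icc (0:ℝ) 1, w t ∈ Complex.slitPlane := by
      intro t ht
      by_cases himz : z.im = 0
      · have hre : 0 < z.re := by
          rcases Complex.mem_slitPlane_iff.mp hzs with h | h
          · exact h
          · exact absurd himz h
        refine Or.inl ?_
        rw [hwre]
        rcases eq_or_lt_of_le ht.1 with h0 | h0
        · rw [← h0]; norm_num
        · nlinarith [ht.2, mul_pos h0 hre]
      · rcases eq_or_lt_of_le ht.1 with h0 | h0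
        · exact Or.inl (by rw [hwre, ← h0]; norm_num)
        · exact Or.inr (by rw [hwim]; exact mul_ne_zero (ne_of_gt h0) himz)
    have hwne : ∀ t ∈ Icc (0:ℝ) 1, w t ≠ 0 := fun t ht =>
      Complex.slitPlane_ne_zero (hwmem t ht)
    -- arg of segment points lies between 0 and arg z
    have hwarg : ∀ t ∈ Icc (0:ℝ) 1, 0 ≤ (w t).arg ∧ (w t).arg ≤ z.arg := by
      intro t ht
      have hwim' : 0 ≤ (w t).im := by rw [hwim]; exact mul_nonneg ht.1 him
      refine ⟨Complex.arg_nonneg_iff.mpr hwim', ?_⟩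
      have hwlt : (w t).arg < Real.pi := by
        rw [Complex.arg_lt_pi_iff]
        rcases hwmem t ht with h | h
        · exact Or.inl h.le
        · exact Or.inr h
      refine seg_arg_le hz0 him (hwne t ht) hwim' hwlt ?_
      rw [hwre, hwim]
      nlinarith [ht.2, him]
    -- derivative of w
    have hwd : ∀ t : ℝ, HasDerivAt w (z - 1) t := by
      intro t
      have h1 : HasDerivAt (fun u : ℝ => (u : ℂ)) 1 t := by
        simpa using (hasDerivAt_id t).ofReal_comp
      simpa [hw_def] using (h1.mul_const (z - 1)).const_add 1
    have hwc : Continuous w := by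
      simp only [hw_def]
      exact continuous_const.add (Complex.continuous_ofReal.mul continuous_const)
    -- the integrand and FTC identity
    set f : ℝ → ℂ := fun t => (1 - (t : ℂ)) * (w t) ^ ((s : ℝ) : ℂ) with hf_def
    set K : ℂ := (α : ℂ) * ((α : ℂ) - 1) * (z - 1) ^ 2 with hK_def
    set F : ℝ → ℂ := fun t =>
      (1 - (t : ℂ)) * ((α : ℂ) * (z - 1)) * (w t) ^ ((α : ℂ) - 1) + (w t) ^ (α : ℂ)
      with hF_def
    have hfc : ContinuousOn f (Icc (0:ℝ) 1) := by
      intro t ht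
      apply ContinuousAt.continuousWithinAt
      exact ((continuous_const.sub Complex.continuous_ofReal).continuousAt).mul
        ((continuousAt_cpow_const (hwmem t ht)).comp hwc.continuousAt)
    have hFd : ∀ t ∈ uIcc (0:ℝ) 1, HasDerivAt F (K * f t) t := by
      intro t ht
      rw [uIcc_of_le zero_le_one] at ht
      have hm := hwmem t ht
      have d1 : HasDerivAt (fun u : ℝ => (w u) ^ ((α : ℂ) - 1))
          (((α : ℂ) - 1) * (w t) ^ ((α : ℂ) - 1 - 1) * (z - 1)) t :=
        (Complex.hasStrictDerivAt_cpow_const hm).hasDerivAt.comp t (hwd t)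
      have d2 : HasDerivAt (fun u : ℝ => (w u) ^ (α : ℂ))
          ((α : ℂ) * (w t) ^ ((α : ℂ) - 1) * (z - 1)) t :=
        (Complex.hasStrictDerivAt_cpow_const hm).hasDerivAt.comp t (hwd t)
      have h1 : HasDerivAt (fun u : ℝ => (u : ℂ)) 1 t := by
        simpa using (hasDerivAt_id t).ofReal_comp
      have d3 : HasDerivAt (fun u : ℝ => (1 - (u : ℂ)) * ((α : ℂ) * (z - 1)))
          (-((α : ℂ) * (z - 1))) t := by
        simpa using ((h1.const_sub 1).mul_const ((α : ℂ) * (z - 1)))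
      have := (d3.mul d1).add d2
      refine this.congr_deriv ?_
      have e1 : ((α : ℂ) - 1 - 1) = ((s : ℝ) : ℂ) := by
        simp [hs_def]; push_cast; ring
      rw [e1, hf_def, hK_def]
      ring
    have hKf : IntervalIntegrable (fun t => K * f t) MeasureTheory.volume 0 1 := by
      apply ContinuousOn.intervalIntegrable
      rw [uIcc_of_le zero_le_one]
      exact continuousOn_const.mul hfc
    have hfint : IntervalIntegrable f MeasureTheory.volume 0 1 := by
      apply ContinuousOn.intervalIntegrable
      rw [uIcc_of_le zero_le_one]
      exact hfc
    have key : K * ∫ t in (0:ℝ)..1, f t = z ^ (α : ℂ) - 1 - (α : ℂ) * (z - 1) := by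
      rw [← intervalIntegral.integral_const_mul]
      rw [intervalIntegral.integral_eq_sub_of_hasDerivAt hFd hKf]
      have hw1 : w 1 = z := by simp [hw_def]
      have hw0 : w 0 = 1 := by simp [hw_def]
      simp only [hF_def, hw1, hw0, Complex.one_cpow, Complex.ofReal_one,
        Complex.ofReal_zero]
      ring
    rw [← key]
    refine mul_ne_zero ?_ ?_
    · refine mul_ne_zero (mul_ne_zero ?_ ?_) (pow_ne_zero 2 (sub_ne_zero.mpr hz1))
      · exact Complex.ofReal_ne_zero.mpr (by linarith)
      · intro h
        have h1 : (α : ℂ) = 1 := sub_eq_zero.mp h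
        have h2 : α = 1 := by exact_mod_cast h1
        linarith
    · -- the integral is nonzero
      set c : ℂ := (starRingEnd ℂ) (z ^ (((s / 2 : ℝ)) : ℂ)) with hc_def
      have hgpos : ∀ t ∈ Ioo (0:ℝ) 1, 0 < (c * f t).re := by
        intro t ht
        have ht' : t ∈ Icc (0:ℝ) 1 := ⟨ht.1.le, ht.2.le⟩
        have hwne' := hwne t ht'
        have harg := hwarg t ht'
        set u : ℂ := (starRingEnd ℂ) (Complex.log z * ((s / 2 : ℝ) : ℂ))
            + Complex.log (w t) * ((s : ℝ) : ℂ) with hu_def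
        have hexp : c * (w t) ^ ((s : ℝ) : ℂ) = Complex.exp u := by
          rw [hc_def, hu_def, Complex.cpow_def_of_ne_zero hz0,
            Complex.cpow_def_of_ne_zero hwne', ← Complex.exp_conj, ← Complex.exp_add]
        have him_eq : u.im = s * (w t).arg - s / 2 * z.arg := by
          simp only [hu_def, Complex.add_im, Complex.conj_im, Complex.mul_im,
            Complex.ofReal_re, Complex.ofReal_im, Complex.log_im, Complex.log_re,
            mul_zero, zero_mul, add_zero, zero_add, neg_mul, neg_neg, neg_add]
          ring
        have hcos : 0 < Real.cos u.im := by
          apply Real.cos_pos_of_mem_Ioo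
          rw [him_eq, Set.mem_Ioo]
          constructor
          · nlinarith [harg.1, harg.2, mul_nonneg hs0.le harg.1, Real.pi_pos,
              mul_le_mul_of_nonneg_right hs1 hzarg0,
              mul_le_mul_of_nonneg_left harg.2 hs0.le]
          · nlinarith [harg.1, harg.2, mul_nonneg hs0.le harg.1, Real.pi_pos,
              mul_le_mul_of_nonneg_right hs1 hzarg0,
              mul_le_mul_of_nonneg_left harg.2 hs0.le]
        have hsplit : c * f t = ((1 - t : ℝ) : ℂ) * Complex.exp u := by
          rw [← hexp, hf_def]
          push_cast
          ring
        rw [hsplit, Complex.re_ofReal_mul, Complex.exp_re]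
        have h1t : 0 < 1 - t := by linarith [ht.2]
        positivity
      have h1 : IntervalIntegrable (fun t => c * f t) MeasureTheory.volume 0 1 := by
        apply ContinuousOn.intervalIntegrable
        rw [uIcc_of_le zero_le_one]
        exact continuousOn_const.mul hfc
      have h2 : IntervalIntegrable (fun t => (c * f t).re) MeasureTheory.volume 0 1 := by
        apply ContinuousOn.intervalIntegrable
        rw [uIcc_of_le zero_le_one]
        exact Complex.continuous_re.comp_continuousOn (continuousOn_const.mul hfc)
      have h3 := intervalIntegral.intervalIntegral_pos_of_pos_on h2 hgpos one_pos
      have h4 : (∫ t in (0:ℝ)..1, (c * f t).re)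
          = (c * ∫ t in (0:ℝ)..1, f t).re := by
        rw [← intervalIntegral.integral_const_mul]
        have h5 := ContinuousLinearMap.intervalIntegral_comp_comm Complex.reCLM h1
        simpa using h5
      intro hI0
      rw [hI0, mul_zero] at h4
      rw [h4] at h3
      simp at h3

theorem stmt8 (α : ℝ) (hα : α ∈ Set.Ioc (2 : ℝ) 3) (z : ℂ)
    (hz : ¬(z.im = 0 ∧ z.re < 0)) : halpha α z ≠ 0 := by
  obtain ⟨hα2, hα3⟩ := hα
  by_cases hz0 : z = 0
  · subst hz0
    simp only [halpha, if_neg (by norm_num : (0:ℂ) ≠ 1), if_pos rfl]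
    exact Complex.ofReal_ne_zero.mpr (by linarith)
  · have hzs : z ∈ Complex.slitPlane := by
      rw [Complex.mem_slitPlane_iff]
      by_cases him : z.im = 0
      · left
        have h1 : ¬ z.re < 0 := fun h => hz ⟨him, h⟩
        have h2 : z.re ≠ 0 := fun h => hz0 (Complex.ext h him)
        exact lt_of_le_of_ne (not_lt.mp h1) (Ne.symm h2)
      · exact Or.inr him
    rcases le_or_gt 0 z.im with him | him
    · exact halpha_ne_zero_of_im_nonneg α hα2 hα3 z hzs him
    · have hcs : (starRingEnd ℂ) z ∈ Complex.slitPlane := by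
        rcases Complex.mem_slitPlane_iff.mp hzs with h | h
        · exact Or.inl (by simpa using h)
        · exact Or.inr (by simpa using h)
      have hc := halpha_ne_zero_of_im_nonneg α hα2 hα3 ((starRingEnd ℂ) z) hcs
        (by simp; linarith)
      have hz1 : z ≠ 1 := fun h => by simp [h] at him
      have hcz1 : (starRingEnd ℂ) z ≠ 1 := by
        intro h
        apply hz1
        have := congrArg (starRingEnd ℂ) h
        simpa using this
      have hcz0 : (starRingEnd ℂ) z ≠ 0 := by simpa using hz0
      have harg : z.arg ≠ Real.pi := by
        have : z.arg < 0 := Complex.arg_neg_iff.mpr him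
        linarith [Real.pi_pos]
      have hconj : halpha α ((starRingEnd ℂ) z) = (starRingEnd ℂ) (halpha α z) := by
        rw [halpha, halpha, if_neg hcz1, if_neg hcz0, if_neg hz1, if_neg hz0]
        rw [show ((starRingEnd ℂ) z) ^ (α : ℂ) = (starRingEnd ℂ) (z ^ (α : ℂ)) by
          rw [Complex.conj_cpow z (α : ℂ) harg, Complex.conj_ofReal]]
        simp [map_div₀, map_sub, map_mul, map_pow, map_one, Complex.conj_ofReal]
      intro h
      exact hc (by rw [hconj, h, map_zero])
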